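/- For every N ≥ 1 that is not of the form r(3r−1)/2 or r(3r+1)/2 for a positive integer r, Σ_{λ ∈ 𝒟_N} (−1)^{n_λ} m_λ = −Σ_{λ ∈ 𝒟_N} (−1)^{n_λ} n_λ; that is, the signed sum of (m_λ + n_λ) over all partitions of N into distinct parts vanishes at non-pentagonal N. -/

import Mathlib

open Finset

/-- `𝒟_N`: the partitions of `N` into distinct parts, encoded as finsets of positive
integers summing to `N` (all parts are at most `N`). -/
def distinctPartitions (N : ℕ) : Finset (Finset ℕ) :=
  (Finset.Icc 1 N).powerset.filter fun s => s.sum id = N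

/-- The set of elements of `s` that start a run reaching up to `m`. -/
def tset (s : Finset ℕ) (m : ℕ) : Set ℕ := {x | x ∈ s ∧ Finset.Icc x m ⊆ s}

/-- Franklin's involution. -/
noncomputable def frank (s : Finset ℕ) : Finset ℕ :=
  if hs : s.Nonempty then
    if s.min' hs + sInf (tset s (s.max' hs)) ≤ s.max' hs + 1 then
      insert (s.max' hs + 1)
        ((s.erase (s.min' hs)).erase (s.max' hs + 1 - s.min' hs))
    else
      insert (s.max' hs + 1 - sInf (tset s (s.max' hs)))
        (insert (sInf (tset s (s.max' hs)) - 1) (s.erase (s.max' hs)))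
  else s

lemma frank_eval1 {s : Finset ℕ} (hs : s.Nonempty)
    (hc : s.min' hs + sInf (tset s (s.max' hs)) ≤ s.max' hs + 1) :
    frank s = insert (s.max' hs + 1)
        ((s.erase (s.min' hs)).erase (s.max' hs + 1 - s.min' hs)) := by
  rw [frank, dif_pos hs, if_pos hc]

lemma frank_eval2 {s : Finset ℕ} (hs : s.Nonempty)
    (hc : ¬ s.min' hs + sInf (tset s (s.max' hs)) ≤ s.max' hs + 1) :
    frank s = insert (s.max' hs + 1 - sInf (tset s (s.max' hs)))
        (insert (sInf (tset s (s.max' hs)) - 1) (s.erase (s.max' hs))) := by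
  rw [frank, dif_pos hs, if_neg hc]

lemma max'_eq {s : Finset ℕ} (hs : s.Nonempty) {x : ℕ} (hx : x ∈ s)
    (hub : ∀ y ∈ s, y ≤ x) : s.max' hs = x :=
  le_antisymm (s.max'_le hs x hub) (s.le_max' x hx)

lemma min'_eq {s : Finset ℕ} (hs : s.Nonempty) {x : ℕ} (hx : x ∈ s)
    (hlb : ∀ y ∈ s, x ≤ y) : s.min' hs = x :=
  le_antisymm (s.min'_le x hx) (le_min' s hs x hlb)

lemma tset_nonempty {s : Finset ℕ} (hs : s.Nonempty) : (tset s (s.max' hs)).Nonempty := by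
  refine ⟨s.max' hs, s.max'_mem hs, ?_⟩
  rw [Finset.Icc_self]
  simpa using s.max'_mem hs

lemma sInf_tset_mem {s : Finset ℕ} (hs : s.Nonempty) :
    sInf (tset s (s.max' hs)) ∈ s ∧ Finset.Icc (sInf (tset s (s.max' hs))) (s.max' hs) ⊆ s :=
  Nat.sInf_mem (tset_nonempty hs)

lemma sInf_tset_eq {s : Finset ℕ} {m x : ℕ} (hT : (tset s m).Nonempty)
    (hx : x ∈ s) (hrun : Finset.Icc x m ⊆ s) (hpred : x - 1 ∉ s) (hx1 : 1 ≤ x)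
    (hxm : x ≤ m) : sInf (tset s m) = x := by
  refine le_antisymm (Nat.sInf_le ⟨hx, hrun⟩) ?_
  by_contra hlt
  push_neg at hlt
  obtain ⟨ht_mem, ht_run⟩ := Nat.sInf_mem hT
  exact hpred (ht_run (Finset.mem_Icc.2 ⟨by omega, by omega⟩))

/-- Gauss sum over an interval, in `ℤ`. -/
lemma two_mul_sum_Icc (a b : ℕ) (hab : a ≤ b + 1) :
    2 * (∑ i ∈ Finset.Icc a b, (i : ℤ)) = ((a : ℤ) + b) * ((b : ℤ) + 1 - a) := by
  induction b with
  | zero =>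
    interval_cases a <;> simp
  | succ n ih =>
    rcases Nat.lt_or_ge a (n + 2) with h1 | h2
    · have hle : a ≤ n + 1 := by omega
      rw [Finset.sum_Icc_succ_top hle]
      have := ih hle
      push_cast at this ⊢
      linear_combination this
    · have : a = n + 2 := by omega
      subst this
      rw [Finset.Icc_eq_empty (by omega)]
      simp only [Finset.sum_empty, mul_zero]
      push_cast
      ring

lemma sum_eq_int {s : Finset ℕ} {N : ℕ} (hsum : s.sum id = N) :
    (N : ℤ) = ∑ i ∈ s, (i : ℤ) := by
  rw [← hsum]
  push_cast
  simp

lemma sup_id_eq_max' {s : Finset ℕ} (hs : s.Nonempty) : s.sup id = s.max' hs := by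
  rw [Finset.max'_eq_sup', Finset.sup'_eq_sup]

lemma frank_key {N : ℕ} (hN : 1 ≤ N)
    (h : ∀ r : ℕ, 0 < r → ¬(2 * N = 3 * r * r - r ∨ 2 * N = 3 * r * r + r))
    {s : Finset ℕ} (hs : s ∈ distinctPartitions N) :
    frank s ∈ distinctPartitions N ∧ frank (frank s) = s ∧
      (frank s).card + (frank s).sup id = s.card + s.sup id ∧
      ((frank s).card = s.card + 1 ∨ s.card = (frank s).card + 1) := by
  rw [distinctPartitions, Finset.mem_filter, Finset.mem_powerset] at hs
  obtain ⟨hsub, hsum⟩ := hs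
  have hne : s.Nonempty := by
    rw [Finset.nonempty_iff_ne_empty]
    rintro rfl
    simp at hsum
    omega
  set m := s.max' hne with hm
  set a := s.min' hne with ha
  set t := sInf (tset s m) with ht
  obtain ⟨ht_mem, ht_run⟩ := sInf_tset_mem hne
  rw [← hm, ← ht] at ht_mem ht_run
  have hms : m ∈ s := s.max'_mem hne
  have has : a ∈ s := s.min'_mem hne
  have hbound : ∀ y ∈ s, 1 ≤ y ∧ y ≤ N := by
    intro y hy
    have := hsub hy
    rw [Finset.mem_Icc] at this
    exact this
  have hax : ∀ y ∈ s, a ≤ y := fun y hy => s.min'_le y hy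
  have hxm : ∀ y ∈ s, y ≤ m := fun y hy => s.le_max' y hy
  have ha1 : 1 ≤ a := (hbound a has).1
  have ht1 : 1 ≤ t := (hbound t ht_mem).1
  have hat : a ≤ t := hax t ht_mem
  have htm : t ≤ m := hxm t ht_mem
  have hmN : m ≤ N := (hbound m hms).2
  have hpred : t - 1 ∉ s := by
    intro hmem
    have h1t : 1 ≤ t - 1 := (hbound _ hmem).1
    have hrun' : Finset.Icc (t - 1) m ⊆ s := by
      intro x hx
      rw [Finset.mem_Icc] at hx
      rcases Nat.eq_or_lt_of_le hx.1 with h' | h'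
      · rwa [← h']
      · exact ht_run (Finset.mem_Icc.2 ⟨by omega, hx.2⟩)
    have := Nat.sInf_le (s := tset s m) ⟨hmem, hrun'⟩
    omega
  by_cases hc : a + t ≤ m + 1
  · -- Case 1: smallest part ≤ length of the top run
    set b := m + 1 - a with hb
    have hab' : a + b = m + 1 := by omega
    have htb : t ≤ b := by omega
    have hbm : b ≤ m := by omega
    have hbs : b ∈ s := ht_run (Finset.mem_Icc.2 ⟨htb, hbm⟩)
    -- exclude the pentagonal case to get a < b
    have hab : a < b := by
      rcases Nat.lt_or_ge a b with h' | h'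
      · exact h'
      · exfalso
        have hba : a = b := le_antisymm (hax b hbs) h'
        have hm2a : m + 1 = 2 * a := by omega
        have hseq : s = Finset.Icc a m := by
          apply Finset.Subset.antisymm
          · intro x hx
            exact Finset.mem_Icc.2 ⟨hax x hx, hxm x hx⟩
          · intro x hx
            rw [Finset.mem_Icc] at hx
            exact ht_run (Finset.mem_Icc.2 ⟨by omega, hx.2⟩)
        have h2N : 2 * (N : ℤ) = ((a : ℤ) + m) * ((m : ℤ) + 1 - a) := by
          rw [sum_eq_int hsum, hseq]
          exact two_mul_sum_Icc a m (by omega)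
        have hmz : (m : ℤ) = 2 * a - 1 := by omega
        have hZ : 2 * (N : ℤ) + a = 3 * a * a := by
          rw [h2N, hmz]; ring
        have hn : 2 * N + a = 3 * a * a := by exact_mod_cast hZ
        exact h a (by omega) (Or.inl (Nat.eq_sub_of_add_eq hn))
    have hm1s : m + 1 ∉ s := fun hmem => by have := hxm _ hmem; omega
    have hbea : b ∈ s.erase a := Finset.mem_erase.2 ⟨by omega, hbs⟩
    have hm1e : m + 1 ∉ (s.erase a).erase b := fun hmem =>
      hm1s (Finset.mem_of_mem_erase (Finset.mem_of_mem_erase hmem))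
    have hfr : frank s = insert (m + 1) ((s.erase a).erase b) := frank_eval1 hne hc
    have hns1 : (insert (m + 1) ((s.erase a).erase b)).Nonempty :=
      ⟨m + 1, Finset.mem_insert_self _ _⟩
    set s1 := insert (m + 1) ((s.erase a).erase b) with hs1
    -- sum
    have hsum' : ∑ x ∈ s, x = N := by simpa using hsum
    have he1 : a + ∑ x ∈ s.erase a, x = N := by
      have h0 := Finset.add_sum_erase s (fun x => x) has
      omega
    have he2 : b + ∑ x ∈ (s.erase a).erase b, x = ∑ x ∈ s.erase a, x := by
      have h0 := Finset.add_sum_erase (s.erase a) (fun x => x) hbea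
      simpa using h0
    have hsum1 : s1.sum id = N := by
      rw [hs1, Finset.sum_insert hm1e]
      simp only [id_eq]
      omega
    -- m + 1 ≤ N
    have hmea : m ∈ s.erase a := Finset.mem_erase.2 ⟨by omega, hms⟩
    have hmN1 : m + 1 ≤ N := by
      have hle : m ≤ ∑ x ∈ s.erase a, x :=
        Finset.single_le_sum (f := fun x => x) (fun i _ => Nat.zero_le _) hmea
      omega
    have hsub1 : s1 ⊆ Finset.Icc 1 N := by
      intro x hx
      rw [hs1, Finset.mem_insert] at hx
      rcases hx with rfl | hx
      · exact Finset.mem_Icc.2 ⟨by omega, hmN1⟩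
      · exact hsub (Finset.mem_of_mem_erase (Finset.mem_of_mem_erase hx))
    have hmem1 : s1 ∈ distinctPartitions N := by
      rw [distinctPartitions, Finset.mem_filter, Finset.mem_powerset]
      exact ⟨hsub1, hsum1⟩
    -- card
    have hcard1 : s.card = s1.card + 1 := by
      have c1 : (s.erase a).card = s.card - 1 := Finset.card_erase_of_mem has
      have c2 : ((s.erase a).erase b).card = (s.erase a).card - 1 :=
        Finset.card_erase_of_mem hbea
      have c3 : s1.card = ((s.erase a).erase b).card + 1 :=
        Finset.card_insert_of_notMem hm1e
      have d1 : 1 ≤ (s.erase a).card := Finset.card_pos.2 ⟨b, hbea⟩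
      have d2 : 1 ≤ s.card := Finset.card_pos.2 ⟨a, has⟩
      omega
    -- max' of s1
    have hub1 : ∀ y ∈ s1, y ≤ m + 1 := by
      intro y hy
      rw [hs1, Finset.mem_insert] at hy
      rcases hy with rfl | hy
      · exact le_refl _
      · have := hxm y (Finset.mem_of_mem_erase (Finset.mem_of_mem_erase hy))
        omega
    have hmax1 : s1.max' hns1 = m + 1 := max'_eq hns1 (Finset.mem_insert_self _ _) hub1
    -- min' of s1 is > a
    have hlb1 : ∀ y ∈ s1, a + 1 ≤ y := by
      intro y hy
      rw [hs1, Finset.mem_insert] at hy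
      rcases hy with rfl | hy
      · omega
      · have hys := Finset.mem_of_mem_erase (Finset.mem_of_mem_erase hy)
        have hne' := (Finset.mem_erase.1 (Finset.mem_of_mem_erase hy)).1
        have := hax y hys
        omega
    -- top run of s1
    have hrun1 : Finset.Icc (b + 1) (m + 1) ⊆ s1 := by
      intro x hx
      rw [Finset.mem_Icc] at hx
      rcases Nat.eq_or_lt_of_le hx.2 with h' | h'
      · rw [h']; exact Finset.mem_insert_self _ _
      · have hxs : x ∈ s := ht_run (Finset.mem_Icc.2 ⟨by omega, by omega⟩)
        refine Finset.mem_insert_of_mem (Finset.mem_erase.2 ⟨by omega,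
          Finset.mem_erase.2 ⟨by omega, hxs⟩⟩)
    have hb1mem : b + 1 ∈ s1 := hrun1 (Finset.mem_Icc.2 ⟨le_refl _, by omega⟩)
    have hbnot : b ∉ s1 := by
      rw [hs1, Finset.mem_insert]
      rintro (h' | h')
      · omega
      · exact (Finset.mem_erase.1 h').1 rfl
    have ht1eq : sInf (tset s1 (m + 1)) = b + 1 := by
      refine sInf_tset_eq ⟨b + 1, hb1mem, hrun1⟩ hb1mem hrun1 ?_ (by omega) (by omega)
      simpa using hbnot
    have hcond1 : ¬ (s1.min' hns1 + sInf (tset s1 (s1.max' hns1)) ≤ s1.max' hns1 + 1) := by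
      rw [hmax1, ht1eq]
      have := hlb1 _ (s1.min'_mem hns1)
      omega
    have hinv : frank s1 = s := by
      rw [frank_eval2 hns1 hcond1, hmax1, ht1eq]

      have e1 : m + 1 + 1 - (b + 1) = a := by omega
      have e2 : b + 1 - 1 = b := by omega
      rw [e1, e2]
      have e3 : s1.erase (m + 1) = (s.erase a).erase b := by
        rw [hs1, Finset.erase_insert hm1e]
      rw [e3, Finset.insert_erase hbea, Finset.insert_erase has]
    refine ⟨by rw [hfr]; exact hmem1, by rw [hfr]; exact hinv, ?_, ?_⟩
    · rw [hfr]
      rw [sup_id_eq_max' hns1, hmax1, sup_id_eq_max' hne, ← hm]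
      omega
    · rw [hfr]; omega
  · -- Case 2: smallest part > length of the top run
    have hc' : m + 2 ≤ a + t := by omega
    have ht2 : 2 ≤ t := by omega
    have hσa : m + 1 - t < a := by omega
    have hle2 : m ≤ 2 * t - 2 := by omega
    have hm3 : m + 3 ≤ 2 * t := by
      rcases Nat.lt_or_ge (m + 3) (2 * t + 1) with h' | h'
      · omega
      · exfalso
        have hmeq : m = 2 * t - 2 := by omega
        have hseq : s = Finset.Icc t m := by
          apply Finset.Subset.antisymm
          · intro x hx
            have h1 := hax x hx
            have h2 := hxm x hx
            exact Finset.mem_Icc.2 ⟨by omega, h2⟩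
          · exact ht_run
        have h2N : 2 * (N : ℤ) = ((t : ℤ) + m) * ((m : ℤ) + 1 - t) := by
          rw [sum_eq_int hsum, hseq]
          exact two_mul_sum_Icc t m (by omega)
        set r := t - 1 with hr
        have hrz : (r : ℤ) = (t : ℤ) - 1 := by omega
        have hmz : (m : ℤ) = 2 * t - 2 := by omega
        have hZ : 2 * (N : ℤ) = 3 * r * r + r := by
          rw [h2N, hmz, hrz]; ring
        have hn : 2 * N = 3 * r * r + r := by exact_mod_cast hZ
        exact h r (by omega) (Or.inr hn)
    have ht1s : t - 1 ∉ s.erase m := fun hmem => hpred (Finset.mem_of_mem_erase hmem)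
    have hσins : m + 1 - t ∉ insert (t - 1) (s.erase m) := by
      rw [Finset.mem_insert]
      rintro (h' | h')
      · omega
      · have := hax _ (Finset.mem_of_mem_erase h')
        omega
    have hfr : frank s = insert (m + 1 - t) (insert (t - 1) (s.erase m)) :=
      frank_eval2 hne hc
    set s2 := insert (m + 1 - t) (insert (t - 1) (s.erase m)) with hs2
    have hns2 : s2.Nonempty := ⟨m + 1 - t, Finset.mem_insert_self _ _⟩
    -- sum
    have hsum' : ∑ x ∈ s, x = N := by simpa using hsum
    have he1 : m + ∑ x ∈ s.erase m, x = N := by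
      have h0 := Finset.add_sum_erase s (fun x => x) hms
      omega
    have hsum2 : s2.sum id = N := by
      rw [hs2, Finset.sum_insert hσins, Finset.sum_insert ht1s]
      simp only [id_eq]
      omega
    have hsub2 : s2 ⊆ Finset.Icc 1 N := by
      intro x hx
      rw [hs2, Finset.mem_insert, Finset.mem_insert] at hx
      rcases hx with rfl | rfl | hx
      · exact Finset.mem_Icc.2 ⟨by omega, by omega⟩
      · exact Finset.mem_Icc.2 ⟨by omega, by omega⟩
      · exact hsub (Finset.mem_of_mem_erase hx)
    have hmem2 : s2 ∈ distinctPartitions N := by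
      rw [distinctPartitions, Finset.mem_filter, Finset.mem_powerset]
      exact ⟨hsub2, hsum2⟩
    -- card
    have hcard2 : s2.card = s.card + 1 := by
      have c1 : (s.erase m).card = s.card - 1 := Finset.card_erase_of_mem hms
      have c2 : (insert (t - 1) (s.erase m)).card = (s.erase m).card + 1 :=
        Finset.card_insert_of_notMem ht1s
      have c3 : s2.card = (insert (t - 1) (s.erase m)).card + 1 :=
        Finset.card_insert_of_notMem hσins
      have d2 : 1 ≤ s.card := Finset.card_pos.2 ⟨m, hms⟩
      omega
    -- max' of s2
    have hub2 : ∀ y ∈ s2, y ≤ m - 1 := by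
      intro y hy
      rw [hs2, Finset.mem_insert, Finset.mem_insert] at hy
      rcases hy with rfl | rfl | hy
      · omega
      · omega
      · have h1 := hxm y (Finset.mem_of_mem_erase hy)
        have h2 := (Finset.mem_erase.1 hy).1
        omega
    have hm1mem : m - 1 ∈ s2 := by
      rcases Nat.lt_or_ge t m with h' | h'
      · have hxs : m - 1 ∈ s := ht_run (Finset.mem_Icc.2 ⟨by omega, by omega⟩)
        exact Finset.mem_insert_of_mem (Finset.mem_insert_of_mem
          (Finset.mem_erase.2 ⟨by omega, hxs⟩))
      · have e : t - 1 = m - 1 := by omega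
        rw [hs2]
        exact Finset.mem_insert_of_mem (e ▸ Finset.mem_insert_self _ _)
    have hmax2 : s2.max' hns2 = m - 1 := max'_eq hns2 hm1mem hub2
    have hmin2 : s2.min' hns2 = m + 1 - t := by
      refine min'_eq hns2 (Finset.mem_insert_self _ _) ?_
      intro y hy
      rw [hs2, Finset.mem_insert, Finset.mem_insert] at hy
      rcases hy with rfl | rfl | hy
      · exact le_refl _
      · omega
      · have := hax y (Finset.mem_of_mem_erase hy)
        omega
    have ht2le : sInf (tset s2 (m - 1)) ≤ t - 1 := by
      apply Nat.sInf_le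
      constructor
      · exact Finset.mem_insert_of_mem (Finset.mem_insert_self _ _)
      · intro x hx
        rw [Finset.mem_Icc] at hx
        rcases Nat.eq_or_lt_of_le hx.1 with h' | h'
        · rw [← h']; exact Finset.mem_insert_of_mem (Finset.mem_insert_self _ _)
        · have hxs : x ∈ s := ht_run (Finset.mem_Icc.2 ⟨by omega, by omega⟩)
          exact Finset.mem_insert_of_mem (Finset.mem_insert_of_mem
            (Finset.mem_erase.2 ⟨by omega, hxs⟩))
    have hcond2 : s2.min' hns2 + sInf (tset s2 (s2.max' hns2)) ≤ s2.max' hns2 + 1 := by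
      rw [hmax2, hmin2]
      omega
    have hinv : frank s2 = s := by
      rw [frank_eval1 hns2 hcond2, hmax2, hmin2]
      have e1 : m - 1 + 1 = m := by omega
      have e2 : m - (m + 1 - t) = t - 1 := by omega
      rw [e1, e2]
      have e3 : s2.erase (m + 1 - t) = insert (t - 1) (s.erase m) := by
        rw [hs2, Finset.erase_insert hσins]
      rw [e3, Finset.erase_insert ht1s, Finset.insert_erase hms]
    refine ⟨by rw [hfr]; exact hmem2, by rw [hfr]; exact hinv, ?_, ?_⟩
    · rw [hfr]
      rw [sup_id_eq_max' hns2, hmax2, sup_id_eq_max' hne, ← hm]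
      omega
    · rw [hfr]; omega

/-- For every `N ≥ 1` not of the form `r(3r-1)/2` or `r(3r+1)/2` (i.e. `2N = 3r² - r`
or `2N = 3r² + r`) for a positive integer `r`,
`Σ_{λ ∈ 𝒟_N} (-1)^{n_λ} m_λ = -Σ_{λ ∈ 𝒟_N} (-1)^{n_λ} n_λ`, where `n_λ = s.card` is
the number of parts and `m_λ = s.sup id` is the largest part; that is, the signed sum
of `m_λ + n_λ` vanishes at non-pentagonal `N`. -/
theorem signed_sum_largest_part_eq_neg_signed_sum_card (N : ℕ) (hN : 1 ≤ N)
    (h : ∀ r : ℕ, 0 < r → ¬(2 * N = 3 * r * r - r ∨ 2 * N = 3 * r * r + r)) :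
    ∑ s ∈ distinctPartitions N, (-1 : ℤ) ^ s.card * ((s.sup (id : ℕ → ℕ) : ℕ) : ℤ)
      = -∑ s ∈ distinctPartitions N, (-1 : ℤ) ^ s.card * (s.card : ℤ) := by
  have key : ∑ s ∈ distinctPartitions N,
      ((-1 : ℤ) ^ s.card * (((s.sup (id : ℕ → ℕ) : ℕ) : ℤ) + (s.card : ℤ))) = 0 := by
    apply Finset.sum_involution (g := fun s _ => frank s)
    · intro s hsmem
      obtain ⟨_, _, hsum, hcard⟩ := frank_key hN h hsmem
      have hK : ((((frank s).sup (id : ℕ → ℕ) : ℕ)) : ℤ) + ((frank s).card : ℤ)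
          = (((s.sup (id : ℕ → ℕ) : ℕ) : ℤ) + (s.card : ℤ)) := by
        omega
      have hsgn : (-1 : ℤ) ^ (frank s).card = -(-1 : ℤ) ^ s.card := by
        rcases hcard with h1 | h1 <;> rw [h1, pow_succ] <;> ring
      rw [hsgn, hK]
      ring
    · intro s hsmem _
      obtain ⟨_, _, _, hcard⟩ := frank_key hN h hsmem
      intro heq
      rw [heq] at hcard
      omega
    · intro s hsmem
      exact (frank_key hN h hsmem).1
    · intro s hsmem
      exact (frank_key hN h hsmem).2.1
  have expand : (∑ s ∈ distinctPartitions N, (-1 : ℤ) ^ s.card * ((s.sup (id : ℕ → ℕ) : ℕ) : ℤ))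
      + (∑ s ∈ distinctPartitions N, (-1 : ℤ) ^ s.card * (s.card : ℤ)) = 0 := by
    rw [← Finset.sum_add_distrib, ← key]
    apply Finset.sum_congr rfl
    intro s _
    ring
  linarith
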